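/- If B₁ is Beta(α,β) distributed and B₂ is Beta(α+β,γ) distributed with B₁ and B₂ independent, then the product B₁·B₂ has the Beta(α, β+γ) distribution. -/

import Mathlib

open MeasureTheory ProbabilityTheory Real Filter Topology Set
open scoped ENNReal

/-- Density (w.r.t. Lebesgue measure) of the Beta(a,b) distribution. -/
noncomputable def betaPDF (a b : ℝ) (x : ℝ) : ℝ≥0∞ :=
  if x ∈ Set.Ioo (0 : ℝ) 1 then
    ENNReal.ofReal (Real.Gamma (a + b) / (Real.Gamma a * Real.Gamma b)
      * x ^ (a - 1) * (1 - x) ^ (b - 1))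
  else 0

lemma ofReal_beta_integrand {b c t : ℝ} (h0 : 0 ≤ t) (h1 : 0 ≤ 1 - t) :
    (t:ℂ) ^ ((b:ℂ) - 1) * ((1:ℂ) - t) ^ ((c:ℂ) - 1)
      = ((t ^ (b - 1) * (1 - t) ^ (c - 1) : ℝ) : ℂ) := by
  rw [show ((1:ℂ) - t) = ((1 - t : ℝ) : ℂ) by push_cast; ring,
      show ((b:ℂ) - 1) = ((b - 1 : ℝ) : ℂ) by push_cast; ring,
      show ((c:ℂ) - 1) = ((c - 1 : ℝ) : ℂ) by push_cast; ring,
      ← Complex.ofReal_cpow h0, ← Complex.ofReal_cpow h1, ← Complex.ofReal_mul]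

lemma intervalIntegrable_beta {b c : ℝ} (hb : 0 < b) (hc : 0 < c) :
    IntervalIntegrable (fun t : ℝ => t ^ (b - 1) * (1 - t) ^ (c - 1)) volume 0 1 := by
  have H := Complex.betaIntegral_convergent (u := (b : ℂ)) (v := (c : ℂ)) (by simpa) (by simpa)
  have heq : EqOn (fun t : ℝ => (t:ℂ) ^ ((b:ℂ) - 1) * ((1:ℂ) - t) ^ ((c:ℂ) - 1))
      (fun t : ℝ => ((t ^ (b - 1) * (1 - t) ^ (c - 1) : ℝ) : ℂ)) (Set.uIoc (0:ℝ) 1) := by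
    intro t ht
    rw [uIoc_of_le zero_le_one] at ht
    exact ofReal_beta_integrand (le_of_lt ht.1) (by linarith [ht.2])
  have H2 : IntervalIntegrable
      (fun t : ℝ => ((t ^ (b - 1) * (1 - t) ^ (c - 1) : ℝ) : ℂ)) volume 0 1 :=
    H.congr heq
  exact ⟨by have h := H2.1.re; simp at h; exact h, by simp⟩

lemma beta_integral_value {b c : ℝ} (hb : 0 < b) (hc : 0 < c) :
    ∫ t in (0:ℝ)..1, t ^ (b - 1) * (1 - t) ^ (c - 1)
      = Real.Gamma b * Real.Gamma c / Real.Gamma (b + c) := by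
  have H := Complex.Gamma_mul_Gamma_eq_betaIntegral (s := (b:ℂ)) (t := (c:ℂ)) (by simpa) (by simpa)
  have heq : Complex.betaIntegral b c
      = ((∫ t in (0:ℝ)..1, t ^ (b - 1) * (1 - t) ^ (c - 1) : ℝ) : ℂ) := by
    rw [Complex.betaIntegral, ← intervalIntegral.integral_ofReal]
    refine intervalIntegral.integral_congr fun t ht => ?_
    rw [uIcc_of_le zero_le_one] at ht
    exact ofReal_beta_integrand ht.1 (by linarith [ht.2])
  rw [heq, Complex.Gamma_ofReal, Complex.Gamma_ofReal, ← Complex.ofReal_add,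
    Complex.Gamma_ofReal, ← Complex.ofReal_mul, ← Complex.ofReal_mul] at H
  have h2 := Complex.ofReal_injective H
  have hne : Real.Gamma (b + c) ≠ 0 := (Real.Gamma_pos_of_pos (by linarith)).ne'
  field_simp
  linarith [h2]

lemma shifted_integrable {b c z : ℝ} (hb : 0 < b) (hc : 0 < c) (hz : z ∈ Ioo (0:ℝ) 1) :
    IntervalIntegrable (fun y : ℝ => (y - z) ^ (b - 1) * (1 - y) ^ (c - 1)) volume z 1 := by
  have hz1 : 0 < 1 - z := by linarith [hz.2]
  have I1 := (intervalIntegrable_beta hb hc).comp_mul_right (c := (1 - z)⁻¹)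
  rw [show (0:ℝ) / (1-z)⁻¹ = 0 by simp, show (1:ℝ) / (1-z)⁻¹ = 1 - z by field_simp] at I1
  have I2 := I1.comp_sub_right z
  rw [show (0:ℝ) + z = z by ring, show (1 - z) + z = 1 by ring] at I2
  have I3 := I2.const_mul ((1 - z) ^ (b - 1) * (1 - z) ^ (c - 1))
  refine I3.congr ?_
  intro y hy
  rw [uIoc_of_le (le_of_lt hz.2)] at hy
  have h1 : 0 ≤ y - z := by linarith [hy.1]
  have h2 : 0 ≤ 1 - y := by linarith [hy.2]
  have e1 : (1:ℝ) - (y - z) * (1 - z)⁻¹ = (1 - y) * (1 - z)⁻¹ := by field_simp; ring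
  simp only [e1]
  rw [Real.mul_rpow h1 (inv_nonneg.mpr hz1.le), Real.mul_rpow h2 (inv_nonneg.mpr hz1.le),
    Real.inv_rpow hz1.le, Real.inv_rpow hz1.le]
  have p1 : (0:ℝ) < (1 - z) ^ (b - 1) := Real.rpow_pos_of_pos hz1 _
  have p2 : (0:ℝ) < (1 - z) ^ (c - 1) := Real.rpow_pos_of_pos hz1 _
  field_simp

lemma shifted_integral_value {b c z : ℝ} (hb : 0 < b) (hc : 0 < c) (hz : z ∈ Ioo (0:ℝ) 1) :
    ∫ y in z..1, (y - z) ^ (b - 1) * (1 - y) ^ (c - 1)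
      = (1 - z) ^ (b + c - 1) * (Real.Gamma b * Real.Gamma c / Real.Gamma (b + c)) := by
  have hz1 : 0 < 1 - z := by linarith [hz.2]
  have step1 : (∫ y in z..1, (y - z) ^ (b - 1) * (1 - y) ^ (c - 1))
      = ∫ t in (0:ℝ)..(1 - z), t ^ (b - 1) * ((1 - z) - t) ^ (c - 1) := by
    have h := intervalIntegral.integral_comp_sub_right
      (a := z) (b := 1) (fun t => t ^ (b - 1) * ((1 - z) - t) ^ (c - 1)) z
    rw [show z - z = (0:ℝ) by ring, show (1:ℝ) - z = 1 - z from rfl] at h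
    rw [← h]
    refine intervalIntegral.integral_congr fun y _ => ?_
    ring_nf
  have step2 : (∫ t in (0:ℝ)..(1 - z), t ^ (b - 1) * ((1 - z) - t) ^ (c - 1))
      = (1 - z) * ∫ u in (0:ℝ)..1, (u * (1 - z)) ^ (b - 1) * ((1 - z) - u * (1 - z)) ^ (c - 1) := by
    have h := intervalIntegral.integral_comp_mul_right
      (a := (0:ℝ)) (b := 1) (fun t => t ^ (b - 1) * ((1 - z) - t) ^ (c - 1)) hz1.ne'
    rw [show (0:ℝ) * (1 - z) = 0 by ring, one_mul] at h
    rw [h, smul_eq_mul, ← mul_assoc, mul_inv_cancel₀ hz1.ne', one_mul]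
  have step3 : (∫ u in (0:ℝ)..1, (u * (1 - z)) ^ (b - 1) * ((1 - z) - u * (1 - z)) ^ (c - 1))
      = (1 - z) ^ (b - 1) * (1 - z) ^ (c - 1)
        * ∫ u in (0:ℝ)..1, u ^ (b - 1) * (1 - u) ^ (c - 1) := by
    rw [← intervalIntegral.integral_const_mul]
    refine intervalIntegral.integral_congr fun u hu => ?_
    rw [uIcc_of_le zero_le_one] at hu
    rw [show (1 - z) - u * (1 - z) = (1 - u) * (1 - z) by ring,
      Real.mul_rpow hu.1 hz1.le, Real.mul_rpow (by linarith [hu.2]) hz1.le]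
    ring
  rw [step1, step2, step3, beta_integral_value hb hc]
  rw [show b + c - 1 = 1 + (b - 1) + (c - 1) by ring, Real.rpow_add hz1, Real.rpow_add hz1,
    Real.rpow_one]
  ring

lemma measurable_betaPDF (a b : ℝ) : Measurable (_root_.betaPDF a b) := by
  unfold _root_.betaPDF
  apply Measurable.ite measurableSet_Ioo _ measurable_const
  apply Measurable.ennreal_ofReal
  exact ((measurable_const.mul (measurable_id.pow measurable_const)).mul
    ((measurable_const.sub measurable_id).pow measurable_const))

lemma betaPDF_of_not_mem {a b x : ℝ} (hx : x ∉ Set.Ioo (0:ℝ) 1) : _root_.betaPDF a b x = 0 :=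
  if_neg hx

lemma betaPDF_of_mem {a b x : ℝ} (hx : x ∈ Set.Ioo (0:ℝ) 1) :
    _root_.betaPDF a b x = ENNReal.ofReal (Real.Gamma (a + b) / (Real.Gamma a * Real.Gamma b)
      * x ^ (a - 1) * (1 - x) ^ (b - 1)) := if_pos hx

lemma key_lintegral {α β γ : ℝ} (hα : 0 < α) (hβ : 0 < β) (hγ : 0 < γ) (z : ℝ) :
    ∫⁻ y in Ioo (0:ℝ) 1, _root_.betaPDF α β (z / y) * _root_.betaPDF (α + β) γ y * ENNReal.ofReal y⁻¹
      = _root_.betaPDF α (β + γ) z := by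
  by_cases hz : z ∈ Ioo (0:ℝ) 1
  · have hz0 := hz.1
    have hz1 := hz.2
    have hGα := Real.Gamma_pos_of_pos hα
    have hGβ := Real.Gamma_pos_of_pos hβ
    have hGγ := Real.Gamma_pos_of_pos hγ
    have hGαβ := Real.Gamma_pos_of_pos (show (0:ℝ) < α + β by linarith)
    have hGβγ := Real.Gamma_pos_of_pos (show (0:ℝ) < β + γ by linarith)
    have hGαβγ := Real.Gamma_pos_of_pos (show (0:ℝ) < α + β + γ by linarith)
    set c₁ := Real.Gamma (α + β) / (Real.Gamma α * Real.Gamma β) with hc₁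
    set c₂ := Real.Gamma (α + β + γ) / (Real.Gamma (α + β) * Real.Gamma γ) with hc₂
    have hc₁pos : 0 < c₁ := by rw [hc₁]; positivity
    have hc₂pos : 0 < c₂ := by rw [hc₂]; positivity
    have hzpow : 0 < z ^ (α - 1) := Real.rpow_pos_of_pos hz0 _
    -- restrict to Ioo z 1
    have hrestrict : ∫⁻ y in Ioo (0:ℝ) 1,
          _root_.betaPDF α β (z / y) * _root_.betaPDF (α + β) γ y * ENNReal.ofReal y⁻¹
        = ∫⁻ y in Ioo z 1,
          _root_.betaPDF α β (z / y) * _root_.betaPDF (α + β) γ y * ENNReal.ofReal y⁻¹ := by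
      rw [← lintegral_indicator measurableSet_Ioo, ← lintegral_indicator measurableSet_Ioo]
      congr 1
      funext y
      by_cases h1 : y ∈ Ioo z 1
      · rw [indicator_of_mem h1, indicator_of_mem (show y ∈ Ioo (0:ℝ) 1 from ⟨lt_trans hz0 h1.1, h1.2⟩)]
      · by_cases h2 : y ∈ Ioo (0:ℝ) 1
        · rw [indicator_of_mem h2, indicator_of_notMem h1]
          have hy0 := h2.1
          have hyz : y ≤ z := by
            by_contra h
            exact h1 ⟨lt_of_not_ge h, h2.2⟩
          have hge : (1:ℝ) ≤ z / y := (one_le_div hy0).mpr hyz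
          rw [betaPDF_of_not_mem (fun hmem => absurd hmem.2 (not_lt.mpr hge)), zero_mul, zero_mul]
        · rw [indicator_of_notMem h1, indicator_of_notMem h2]
    rw [hrestrict]
    have hpt : ∀ y ∈ Ioo z 1,
        _root_.betaPDF α β (z / y) * _root_.betaPDF (α + β) γ y * ENNReal.ofReal y⁻¹
          = ENNReal.ofReal (c₁ * c₂ * z ^ (α - 1))
            * ENNReal.ofReal ((y - z) ^ (β - 1) * (1 - y) ^ (γ - 1)) := by
      intro y hy
      have hy0 : 0 < y := lt_trans hz0 hy.1
      have hq : z / y ∈ Ioo (0:ℝ) 1 := ⟨div_pos hz0 hy0, (div_lt_one hy0).mpr hy.1⟩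
      have hq1 : 0 ≤ 1 - z / y := by linarith [hq.2]
      rw [betaPDF_of_mem hq, betaPDF_of_mem ⟨hy0, hy.2⟩]
      rw [← ENNReal.ofReal_mul (by
        have := Real.rpow_nonneg hq.1.le (α - 1)
        have := Real.rpow_nonneg hq1 (β - 1)
        positivity)]
      rw [← ENNReal.ofReal_mul (by
        have h1 := Real.rpow_nonneg hq.1.le (α - 1)
        have h2 := Real.rpow_nonneg hq1 (β - 1)
        have h3 := Real.rpow_nonneg hy0.le (α + β - 1)
        have h4 := Real.rpow_nonneg (show (0:ℝ) ≤ 1 - y by linarith [hy.2]) (γ - 1)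
        positivity)]
      rw [← ENNReal.ofReal_mul (by positivity)]
      congr 1
      have e1 : (z / y) ^ (α - 1) = z ^ (α - 1) / y ^ (α - 1) :=
        Real.div_rpow hz0.le hy0.le _
      have e2 : (1:ℝ) - z / y = (y - z) / y := by field_simp
      have e3 : ((y - z) / y) ^ (β - 1) = (y - z) ^ (β - 1) / y ^ (β - 1) :=
        Real.div_rpow (by linarith [hy.1]) hy0.le _
      have e4 : y ^ (α + β - 1) = y ^ (α - 1) * (y ^ (β - 1) * y) := by
        rw [show α + β - 1 = (α - 1) + ((β - 1) + 1) by ring, Real.rpow_add hy0,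
          Real.rpow_add hy0, Real.rpow_one]
      have py1 : (0:ℝ) < y ^ (α - 1) := Real.rpow_pos_of_pos hy0 _
      have py2 : (0:ℝ) < y ^ (β - 1) := Real.rpow_pos_of_pos hy0 _
      rw [e2, e1, e3, e4]
      rw [hc₁, hc₂]
      field_simp
    rw [setLIntegral_congr_fun measurableSet_Ioo hpt]
    have hmeas : Measurable (fun y : ℝ =>
        ENNReal.ofReal ((y - z) ^ (β - 1) * (1 - y) ^ (γ - 1))) :=
      (((measurable_id.sub measurable_const).pow measurable_const).mul
        ((measurable_const.sub measurable_id).pow measurable_const)).ennreal_ofReal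
    rw [lintegral_const_mul _ hmeas]
    have hint : IntegrableOn (fun y : ℝ => (y - z) ^ (β - 1) * (1 - y) ^ (γ - 1))
        (Ioo z 1) volume :=
      ((intervalIntegrable_iff_integrableOn_Ioc_of_le hz1.le).mp
        (shifted_integrable hβ hγ hz)).mono_set Ioo_subset_Ioc_self
    have hnonneg : 0 ≤ᵐ[volume.restrict (Ioo z 1)]
        fun y : ℝ => (y - z) ^ (β - 1) * (1 - y) ^ (γ - 1) :=
      (ae_restrict_iff' measurableSet_Ioo).2 (ae_of_all _ fun y hy =>
        mul_nonneg (Real.rpow_nonneg (by linarith [hy.1]) _)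
          (Real.rpow_nonneg (by linarith [hy.2]) _))
    rw [← ofReal_integral_eq_lintegral_ofReal hint hnonneg]
    have hval : (∫ y in Ioo z 1, (y - z) ^ (β - 1) * (1 - y) ^ (γ - 1))
        = (1 - z) ^ (β + γ - 1) * (Real.Gamma β * Real.Gamma γ / Real.Gamma (β + γ)) := by
      rw [← integral_Ioc_eq_integral_Ioo, ← intervalIntegral.integral_of_le hz1.le]
      exact shifted_integral_value hβ hγ hz
    rw [hval, ← ENNReal.ofReal_mul (by positivity), betaPDF_of_mem hz]
    congr 1
    rw [hc₁, hc₂]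
    have h1z : (0:ℝ) ≤ 1 - z := by linarith
    rw [show α + (β + γ) = α + β + γ by ring]
    field_simp
  · rw [betaPDF_of_not_mem hz]
    rw [setLIntegral_congr_fun measurableSet_Ioo (fun y hy => ?_), lintegral_zero]
    simp only [mem_Ioo, not_and, not_lt] at hz
    have hy0 := hy.1
    have hnot : z / y ∉ Ioo (0:ℝ) 1 := by
      intro hmem
      rcases lt_or_ge z 0 with h | h
      · exact absurd hmem.1 (not_lt.mpr (div_nonpos_iff.mpr (Or.inr ⟨h.le, hy0.le⟩)))
      · rcases eq_or_lt_of_le h with h' | h'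
        · rw [← h'] at hmem
          simp at hmem
        · have h1 : (1:ℝ) ≤ z := hz h'
          have : (1:ℝ) ≤ z / y := (one_le_div hy0).mpr (by linarith [hy.2])
          exact absurd hmem.2 (not_lt.mpr this)
    rw [betaPDF_of_not_mem hnot, zero_mul, zero_mul]

theorem beta_beta_product
    {Ω : Type*} [MeasurableSpace Ω] (P : Measure Ω) [IsProbabilityMeasure P]
    (α β γ : ℝ) (hα : 0 < α) (hβ : 0 < β) (hγ : 0 < γ)
    (B₁ B₂ : Ω → ℝ) (hB₁ : Measurable B₁) (hB₂ : Measurable B₂)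
    (hind : IndepFun B₁ B₂ P)
    (hB₁law : Measure.map B₁ P = volume.withDensity (_root_.betaPDF α β))
    (hB₂law : Measure.map B₂ P = volume.withDensity (_root_.betaPDF (α + β) γ)) :
    Measure.map (fun ω => B₁ ω * B₂ ω) P = volume.withDensity (_root_.betaPDF α (β + γ)) := by
  have hf := measurable_betaPDF α β
  have hg := measurable_betaPDF (α + β) γ
  have hfin1 : IsProbabilityMeasure (volume.withDensity (_root_.betaPDF α β)) :=
    hB₁law ▸ Measure.isProbabilityMeasure_map hB₁.aemeasurable
  have hfin2 : IsProbabilityMeasure (volume.withDensity (_root_.betaPDF (α + β) γ)) :=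
    hB₂law ▸ Measure.isProbabilityMeasure_map hB₂.aemeasurable
  have hmul : Measurable (fun p : ℝ × ℝ => p.1 * p.2) := measurable_fst.mul measurable_snd
  have hpair : Measure.map (fun ω => (B₁ ω, B₂ ω)) P
      = (Measure.map B₁ P).prod (Measure.map B₂ P) :=
    (indepFun_iff_map_prod_eq_prod_map_map hB₁.aemeasurable hB₂.aemeasurable).mp hind
  have hstep1 : Measure.map (fun ω => B₁ ω * B₂ ω) P
      = Measure.map (fun p : ℝ × ℝ => p.1 * p.2)
          ((volume.withDensity (_root_.betaPDF α β)).prod (volume.withDensity (_root_.betaPDF (α + β) γ))) := by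
    rw [← hB₁law, ← hB₂law, ← hpair, Measure.map_map hmul (hB₁.prodMk hB₂)]
    rfl
  have hprod : (volume.withDensity (_root_.betaPDF α β)).prod (volume.withDensity (_root_.betaPDF (α + β) γ))
      = (volume.prod volume).withDensity
          (fun p : ℝ × ℝ => _root_.betaPDF α β p.1 * _root_.betaPDF (α + β) γ p.2) :=
    Measure.prod_eq fun s t hs ht => by
      rw [withDensity_apply _ (hs.prod ht), ← Measure.prod_restrict,
        lintegral_prod_mul hf.aemeasurable hg.aemeasurable,
        withDensity_apply _ hs, withDensity_apply _ ht]
  rw [hstep1, hprod]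
  refine Measure.ext fun s hs => ?_
  rw [Measure.map_apply hmul hs, withDensity_apply _ (hmul hs), withDensity_apply _ hs]
  set ind : ℝ → ℝ≥0∞ := s.indicator (fun _ => 1) with hind_def
  have hind_meas : Measurable ind := measurable_one.indicator hs
  have hindne : ∀ u, ind u ≠ ⊤ := fun u => by
    by_cases hu : u ∈ s <;> simp [hind_def, indicator_of_mem, indicator_of_notMem, hu]
  have hφ : ∀ p : ℝ × ℝ, ((fun p : ℝ × ℝ => p.1 * p.2) ⁻¹' s).indicator
      (fun p => _root_.betaPDF α β p.1 * _root_.betaPDF (α + β) γ p.2) p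
      = ind (p.1 * p.2) * (_root_.betaPDF α β p.1 * _root_.betaPDF (α + β) γ p.2) := by
    intro p
    by_cases hp : p.1 * p.2 ∈ s
    · rw [indicator_of_mem (show p ∈ _ from hp), hind_def, indicator_of_mem hp, one_mul]
    · rw [indicator_of_notMem (show p ∉ _ from hp), hind_def, indicator_of_notMem hp, zero_mul]
  rw [← lintegral_indicator (hmul hs), lintegral_congr hφ]
  have hφmeas : Measurable (fun p : ℝ × ℝ =>
      ind (p.1 * p.2) * (_root_.betaPDF α β p.1 * _root_.betaPDF (α + β) γ p.2)) :=
    (hind_meas.comp hmul).mul ((hf.comp measurable_fst).mul (hg.comp measurable_snd))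
  rw [lintegral_prod_symm _ hφmeas.aemeasurable]
  have hres : ∫⁻ y, ∫⁻ x, ind (x * y) * (_root_.betaPDF α β x * _root_.betaPDF (α + β) γ y)
      = ∫⁻ y in Ioo (0:ℝ) 1, ∫⁻ x, ind (x * y) * (_root_.betaPDF α β x * _root_.betaPDF (α + β) γ y) := by
    rw [← lintegral_indicator measurableSet_Ioo]
    apply lintegral_congr
    intro y
    by_cases hy : y ∈ Ioo (0:ℝ) 1
    · rw [indicator_of_mem hy]
    · rw [indicator_of_notMem hy]
      simp only [betaPDF_of_not_mem hy, mul_zero, lintegral_zero]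
  rw [hres]
  have hsub : ∀ y ∈ Ioo (0:ℝ) 1, (∫⁻ x, ind (x * y) * (_root_.betaPDF α β x * _root_.betaPDF (α + β) γ y))
      = ∫⁻ u, ind u * (_root_.betaPDF α β (u / y) * _root_.betaPDF (α + β) γ y * ENNReal.ofReal y⁻¹) := by
    intro y hy
    have hy0 : 0 < y := hy.1
    have hH : Measurable (fun u : ℝ => ind u * (_root_.betaPDF α β (u / y) * _root_.betaPDF (α + β) γ y)) :=
      hind_meas.mul ((hf.comp (measurable_id.div_const y)).mul measurable_const)
    calc ∫⁻ x, ind (x * y) * (_root_.betaPDF α β x * _root_.betaPDF (α + β) γ y)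
        = ∫⁻ x, (fun u => ind u * (_root_.betaPDF α β (u / y) * _root_.betaPDF (α + β) γ y)) (y * x) := by
          apply lintegral_congr
          intro x
          simp only
          rw [mul_comm y x, mul_div_cancel_right₀ x hy0.ne']
      _ = ∫⁻ u, ind u * (_root_.betaPDF α β (u / y) * _root_.betaPDF (α + β) γ y)
            ∂(Measure.map (fun x => y * x) volume) :=
          (lintegral_map hH (measurable_id.const_mul y)).symm
      _ = ENNReal.ofReal |y⁻¹| * ∫⁻ u, ind u * (_root_.betaPDF α β (u / y) * _root_.betaPDF (α + β) γ y) := by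
          rw [Real.map_volume_mul_left hy0.ne', lintegral_smul_measure, smul_eq_mul]
      _ = ∫⁻ u, ind u * (_root_.betaPDF α β (u / y) * _root_.betaPDF (α + β) γ y * ENNReal.ofReal y⁻¹) := by
          rw [abs_of_pos (inv_pos.mpr hy0), ← lintegral_const_mul' _ _ ENNReal.ofReal_ne_top]
          apply lintegral_congr
          intro u
          ring
  rw [setLIntegral_congr_fun measurableSet_Ioo hsub]
  have hswapmeas : Measurable (fun q : ℝ × ℝ =>
      ind q.2 * (_root_.betaPDF α β (q.2 / q.1) * _root_.betaPDF (α + β) γ q.1 * ENNReal.ofReal q.1⁻¹)) :=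
    (hind_meas.comp measurable_snd).mul
      (((hf.comp (measurable_snd.div measurable_fst)).mul (hg.comp measurable_fst)).mul
        (measurable_fst.inv.ennreal_ofReal))
  rw [lintegral_lintegral_swap hswapmeas.aemeasurable]
  have hfinal : ∀ u : ℝ, (∫⁻ y in Ioo (0:ℝ) 1,
        ind u * (_root_.betaPDF α β (u / y) * _root_.betaPDF (α + β) γ y * ENNReal.ofReal y⁻¹))
      = ind u * _root_.betaPDF α (β + γ) u := by
    intro u
    rw [lintegral_const_mul' _ _ (hindne u), key_lintegral hα hβ hγ u]
  rw [lintegral_congr hfinal, ← lintegral_indicator hs]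
  apply lintegral_congr
  intro u
  by_cases hu : u ∈ s
  · rw [hind_def, indicator_of_mem hu, indicator_of_mem hu, one_mul]
  · rw [hind_def, indicator_of_notMem hu, indicator_of_notMem hu, zero_mul]
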